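/- Let θ*, θ̂ ∈ ℝ^n, let 𝓜 ⊆ [n], let η_{mk} > 0 for all m ∈ 𝓜 and k ≠ m, let L > 0 and ζ ≥ 0, and let r_m = 1 + #{k ∈ [n] : θ*_k > θ*_m}. If max_{m∈𝓜} max_{k≠m} |√L·(θ̂_k − θ̂_m − (θ*_k − θ*_m))/η_{mk}| ≤ ζ, then for every m ∈ 𝓜: R_m◇ ≤ r_m ≤ R_m♯, where R_m◇ = 1 + ∑_{k≠m} 1{θ̂_k − θ̂_m > (η_{mk}/√L)·ζ} and R_m♯ = n − ∑_{k≠m} 1{θ̂_k − θ̂_m < −(η_{mk}/√L)·ζ}. -/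
import Mathlib


open Finset

/--
if the studentized pairwise differences are uniformly bounded by `ζ`, i.e.
`max_{m ∈ 𝓜} max_{k ≠ m} |√L (θ̂_k - θ̂_m - (θ*_k - θ*_m)) / η_{mk}| ≤ ζ`, then for every
`m ∈ 𝓜` the population rank `r_m = 1 + #{k : θ*_k > θ*_m}` satisfies `R_m◇ ≤ r_m ≤ R_m♯`,
where `R_m◇ = 1 + ∑_{k ≠ m} 1{θ̂_k - θ̂_m > (η_{mk}/√L)·ζ}` and
`R_m♯ = n - ∑_{k ≠ m} 1{θ̂_k - θ̂_m < -(η_{mk}/√L)·ζ}`.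
-/
theorem simultaneous_rank_confidence_intervals (n : ℕ) (θs θh : Fin n → ℝ)
    (𝓜 : Finset (Fin n)) (η : Fin n → Fin n → ℝ)
    (hη : ∀ m ∈ 𝓜, ∀ k, k ≠ m → 0 < η m k)
    (L : ℝ) (hL : 0 < L) (ζ : ℝ) (hζ : 0 ≤ ζ)
    (hmax : ∀ m ∈ 𝓜, ∀ k, k ≠ m →
      |Real.sqrt L * (θh k - θh m - (θs k - θs m)) / η m k| ≤ ζ) :
    ∀ m ∈ 𝓜,
      1 + (Finset.univ.filter fun k => k ≠ m ∧ η m k / Real.sqrt L * ζ < θh k - θh m).card ≤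
          1 + (Finset.univ.filter fun k => θs m < θs k).card ∧
        1 + (Finset.univ.filter fun k => θs m < θs k).card ≤
          n - (Finset.univ.filter fun k =>
              k ≠ m ∧ θh k - θh m < -(η m k / Real.sqrt L * ζ)).card := by
  intro m hm
  have hsL : 0 < Real.sqrt L := Real.sqrt_pos.mpr hL
  -- key bound: for k ≠ m, |θh k - θh m - (θs k - θs m)| ≤ η m k / √L * ζ
  have key : ∀ k, k ≠ m → |θh k - θh m - (θs k - θs m)| ≤ η m k / Real.sqrt L * ζ := by
    intro k hk
    have hηk := hη m hm k hk
    have h := hmax m hm k hk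
    rw [abs_div, abs_of_pos hηk, div_le_iff₀ hηk] at h
    rw [abs_mul, abs_of_pos hsL] at h
    rw [div_mul_eq_mul_div, le_div_iff₀ hsL, mul_comm]
    linarith
  constructor
  · refine Nat.add_le_add_left (Finset.card_le_card ?_) 1
    intro k hk
    simp only [Finset.mem_filter, Finset.mem_univ, true_and] at *
    obtain ⟨hk1, hk2⟩ := hk
    have := (abs_le.mp (key k hk1)).2
    linarith
  · have hdisj : Disjoint (Finset.univ.filter fun k => θs m < θs k)
        (Finset.univ.filter fun k => k ≠ m ∧ θh k - θh m < -(η m k / Real.sqrt L * ζ)) := by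
      rw [Finset.disjoint_filter]
      intro k _ h1 ⟨hk1, hk2⟩
      have := (abs_le.mp (key k hk1)).1
      linarith
    have hm' : m ∉ (Finset.univ.filter fun k => θs m < θs k) ∪
        (Finset.univ.filter fun k => k ≠ m ∧ θh k - θh m < -(η m k / Real.sqrt L * ζ)) := by
      simp
    have hsub : ((Finset.univ.filter fun k => θs m < θs k) ∪
        (Finset.univ.filter fun k => k ≠ m ∧ θh k - θh m < -(η m k / Real.sqrt L * ζ))).card + 1 ≤ n := by
      have hne : ((Finset.univ.filter fun k => θs m < θs k) ∪
          (Finset.univ.filter fun k => k ≠ m ∧ θh k - θh m < -(η m k / Real.sqrt L * ζ))) ≠ Finset.univ := by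
        intro h
        exact hm' (by rw [h]; exact Finset.mem_univ m)
      have := Finset.card_lt_card ((Finset.subset_univ _).ssubset_of_ne hne)
      simpa [Finset.card_univ, Nat.succ_le_iff] using this
    rw [Finset.card_union_of_disjoint hdisj] at hsub
    omega
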